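/- Write [X,Y]_q = X∘Y − q·Y∘X. For every n ∈ ℤ and every integer k ≥ 0, the following two operator identities hold on K: (1 − q)·t·( 𝓜_{n+4k,n} − 𝓜_{n+2k,n+2k} ) = Σ_{ℓ=0}^{k−1} ( [𝓜_{n+2ℓ}, 𝓜_{n+4k−2ℓ}]_q + [𝓜_{n+4k−1−2ℓ}, 𝓜_{n+2ℓ+1}]_q ), and (1 − q)·t·( 𝓜_{n+4k+2,n} + 𝓜_{n+2k+1,n+2k+1} ) = Σ_{ℓ=0}^{k} ( [𝓜_{n+2ℓ}, 𝓜_{n+4k+2−2ℓ}]_q + [𝓜_{n+4k+1−2ℓ}, 𝓜_{n+2ℓ+1}]_q ). -/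

import Mathlib

open scoped BigOperators

noncomputable section

/-- The field `F(x₁,…,x_N)` of rational functions in `N` variables over `F`. -/
abbrev RatF (F : Type) [Field F] (N : ℕ) : Type :=
  FractionRing (MvPolynomial (Fin N) F)

/-- The variable `xᵢ` viewed inside the rational function field. -/
noncomputable def Xv (F : Type) [Field F] (N : ℕ) (i : Fin N) : RatF F N :=
  algebraMap (MvPolynomial (Fin N) F) (RatF F N) (MvPolynomial.X i)

/-- The generalized Macdonald operator `𝓜ₙ`:
`𝓜ₙ f = Σᵢ xᵢⁿ · (Πⱼ≠ᵢ (t·xᵢ − xⱼ)/(xᵢ − xⱼ)) · Γᵢ(f)`. -/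
noncomputable def Mac (F : Type) [Field F] (N : ℕ) (t : F)
    (Γ : Fin N → (RatF F N ≃ₐ[F] RatF F N)) (n : ℤ) (f : RatF F N) : RatF F N :=
  ∑ i : Fin N, Xv F N i ^ n *
    (∏ j ∈ Finset.univ.erase i, (t • Xv F N i - Xv F N j) / (Xv F N i - Xv F N j)) *
    Γ i f

/-- The operator `𝓜_{a,b}` built from the generalized Schur function
`s_{a,b}(x,y) = (x^{a+1}y^b − y^{a+1}x^b)/(x−y)`:
`𝓜_{a,b} f = Σ_{i<j} s_{a,b}(xᵢ,xⱼ) · Π_{k∉{i,j}} ((t xᵢ−xₖ)(t xⱼ−xₖ))/((xᵢ−xₖ)(xⱼ−xₖ)) · ΓᵢΓⱼ f`. -/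
noncomputable def MacPair (F : Type) [Field F] (N : ℕ) (t : F)
    (Γ : Fin N → (RatF F N ≃ₐ[F] RatF F N)) (a b : ℤ) (f : RatF F N) : RatF F N :=
  ∑ i : Fin N, ∑ j ∈ Finset.univ.filter (fun j : Fin N => i < j),
    ((Xv F N i ^ (a + 1) * Xv F N j ^ b - Xv F N j ^ (a + 1) * Xv F N i ^ b) /
        (Xv F N i - Xv F N j)) *
      (∏ k ∈ (Finset.univ.erase i).erase j,
        ((t • Xv F N i - Xv F N k) * (t • Xv F N j - Xv F N k)) /
          ((Xv F N i - Xv F N k) * (Xv F N j - Xv F N k))) *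
      Γ i (Γ j f)

namespace St11

variable {F : Type} [Field F] {N : ℕ}

lemma algMap_C (r : F) :
    algebraMap F (RatF F N) r
      = algebraMap (MvPolynomial (Fin N) F) (RatF F N) (MvPolynomial.C r) := by
  rw [IsScalarTower.algebraMap_apply F (MvPolynomial (Fin N) F) (RatF F N)]
  rfl

lemma smul_eq_algC (r : F) (z : RatF F N) :
    r • z = algebraMap (MvPolynomial (Fin N) F) (RatF F N) (MvPolynomial.C r) * z := by
  rw [Algebra.smul_def, algMap_C]

lemma Xv_ne_zero (i : Fin N) : Xv F N i ≠ 0 := by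
  simpa [Xv, map_eq_zero_iff _ (IsFractionRing.injective (MvPolynomial (Fin N) F) (RatF F N))]
    using MvPolynomial.X_ne_zero (R := F) (n := i)

lemma Xv_sub_ne_zero {i j : Fin N} (h : i ≠ j) : Xv F N i - Xv F N j ≠ 0 := by
  rw [sub_ne_zero, Xv, Xv]
  intro hEq
  exact h (MvPolynomial.X_injective (IsFractionRing.injective _ (RatF F N) hEq))

lemma Xv_sub_smul_ne_zero (q : F) {i j : Fin N} (h : i ≠ j) :
    Xv F N i - q • Xv F N j ≠ 0 := by
  rw [sub_ne_zero, Xv, smul_eq_algC, Xv, ← map_mul]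
  intro hEq
  have h2 := IsFractionRing.injective (MvPolynomial (Fin N) F) (RatF F N) hEq
  have h3 := congrArg (MvPolynomial.coeff (Finsupp.single i 1)) h2
  rw [MvPolynomial.coeff_X, MvPolynomial.coeff_C_mul, MvPolynomial.coeff_X'] at h3
  rw [if_neg (show ¬ (Finsupp.single j (1:ℕ) = Finsupp.single i 1) by
    intro hh
    exact h (Finsupp.single_left_injective one_ne_zero hh.symm))] at h3
  simp at h3


section Gamma

variable (q : F) (Γ : Fin N → (RatF F N ≃ₐ[F] RatF F N))
variable (hΓ : ∀ i j : Fin N, Γ i (Xv F N j) = if j = i then q • Xv F N j else Xv F N j)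

include hΓ

lemma gamma_comm (i j : Fin N) (z : RatF F N) : Γ i (Γ j z) = Γ j (Γ i z) := by
  have key : ((Γ i).toAlgHom.comp (Γ j).toAlgHom).toRingHom
      = ((Γ j).toAlgHom.comp (Γ i).toAlgHom).toRingHom := by
    apply IsLocalization.ringHom_ext (nonZeroDivisors (MvPolynomial (Fin N) F))
    apply MvPolynomial.ringHom_ext
    · intro r
      simp only [RingHom.comp_apply, AlgHom.toRingHom_eq_coe, RingHom.coe_coe,
        AlgHom.comp_apply, AlgEquiv.toAlgHom_eq_coe, AlgHom.coe_coe]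
      rw [← algMap_C]
      simp [AlgEquiv.commutes]
    · intro s
      have hx : ∀ (u : Fin N) (w : RatF F N),
          Γ u (q • w) = q • Γ u w := fun u w => map_smul (Γ u).toLinearMap q w
      simp only [RingHom.comp_apply, AlgHom.toRingHom_eq_coe, RingHom.coe_coe,
        AlgHom.comp_apply, AlgEquiv.toAlgHom_eq_coe, AlgHom.coe_coe]
      show Γ i (Γ j (Xv F N s)) = Γ j (Γ i (Xv F N s))
      rw [hΓ j s, hΓ i s]
      split_ifs with h1 h2 h2 <;> subst_vars <;> simp [hx, hΓ, *]
  have := congrArg (fun (φ : RatF F N →+* RatF F N) => φ z) key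
  simpa using this

end Gamma


set_option maxHeartbeats 1000000 in
lemma core_identity {K : Type} [Field K] (x y tc qc : K) (a b : ℤ)
    (hx : x ≠ 0) (hy : y ≠ 0) (hxy : x - y ≠ 0)
    (h1 : y - qc * x ≠ 0) (h2 : x - qc * y ≠ 0) :
    (x ^ a * y ^ b + x ^ (b - 1) * y ^ (a + 1)
        - qc * (x ^ b * y ^ a) - qc * (x ^ (a + 1) * y ^ (b - 1))) *
        ((tc * x - y) / (x - y) * ((tc * y - qc * x) / (y - qc * x)))
      + (y ^ a * x ^ b + y ^ (b - 1) * x ^ (a + 1)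
        - qc * (y ^ b * x ^ a) - qc * (y ^ (a + 1) * x ^ (b - 1))) *
        ((tc * y - x) / (y - x) * ((tc * x - qc * y) / (x - qc * y)))
    = (1 - qc) * tc *
        (((x ^ (b + 1) * y ^ a - y ^ (b + 1) * x ^ a)
          - (x ^ (b - 1) * y ^ (a + 2) - y ^ (b - 1) * x ^ (a + 2))) / (x - y)) := by
  have e1 : x ^ (a + 1) = x ^ a * x := zpow_add_one₀ hx a
  have f1 : y ^ (a + 1) = y ^ a * y := zpow_add_one₀ hy a
  have e2 : x ^ (a + 2) = x ^ a * (x * x) := by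
    rw [show a + 2 = (a + 1) + 1 by ring, zpow_add_one₀ hx, e1, mul_assoc]
  have f2 : y ^ (a + 2) = y ^ a * (y * y) := by
    rw [show a + 2 = (a + 1) + 1 by ring, zpow_add_one₀ hy, f1, mul_assoc]
  have e4 : x ^ b = x ^ (b - 1) * x := by
    rw [← zpow_add_one₀ hx]; congr 1; ring
  have f4 : y ^ b = y ^ (b - 1) * y := by
    rw [← zpow_add_one₀ hy]; congr 1; ring
  have e3 : x ^ (b + 1) = x ^ (b - 1) * (x * x) := by
    rw [zpow_add_one₀ hx, e4, mul_assoc]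
  have f3 : y ^ (b + 1) = y ^ (b - 1) * (y * y) := by
    rw [zpow_add_one₀ hy, f4, mul_assoc]
  rw [e1, e2, e3, e4, f1, f2, f3, f4]
  generalize x ^ a = A
  generalize x ^ (b - 1) = B
  generalize y ^ a = A'
  generalize y ^ (b - 1) = B'
  have hyx : y - x ≠ 0 := by rw [← neg_sub, neg_ne_zero]; exact hxy
  have hD1 : (x - y) * (y - qc * x) ≠ 0 := mul_ne_zero hxy h1
  have hD2 : (y - x) * (x - qc * y) ≠ 0 := mul_ne_zero hyx h2
  rw [div_mul_div_comm, div_mul_div_comm]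
  simp only [← mul_div_assoc]
  rw [div_add_div _ _ hD1 hD2, div_eq_div_iff (mul_ne_zero hD1 hD2) hxy]
  ring

/-- The Macdonald operator coefficient. -/
noncomputable def Ac (F : Type) [Field F] (N : ℕ) (t : F) (n : ℤ) (i : Fin N) : RatF F N :=
  Xv F N i ^ n *
    ∏ j ∈ Finset.univ.erase i, (t • Xv F N i - Xv F N j) / (Xv F N i - Xv F N j)

section MacLemmas

variable (q t : F) (Γ : Fin N → (RatF F N ≃ₐ[F] RatF F N))

lemma Mac_eq_sum (n : ℤ) (f : RatF F N) :
    Mac F N t Γ n f = ∑ i : Fin N, Ac F N t n i * Γ i f := by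
  rfl

lemma Mac_Mac (m n : ℤ) (f : RatF F N) :
    Mac F N t Γ m (Mac F N t Γ n f)
      = ∑ i : Fin N, ∑ j : Fin N,
          Ac F N t m i * Γ i (Ac F N t n j) * Γ i (Γ j f) := by
  rw [Mac_eq_sum, Mac_eq_sum]
  refine Finset.sum_congr rfl fun i _ => ?_
  rw [map_sum, Finset.mul_sum]
  refine Finset.sum_congr rfl fun j _ => ?_
  rw [map_mul, mul_assoc]

variable (hΓ : ∀ i j : Fin N, Γ i (Xv F N j) = if j = i then q • Xv F N j else Xv F N j)
include hΓ

omit hΓ in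
lemma gamma_Xv_zpow (i : Fin N) (z : RatF F N) (n : ℤ) :
    Γ i (z ^ n) = (Γ i z) ^ n :=
  map_zpow₀ (Γ i) z n

lemma gamma_Ac_self (i : Fin N) (n : ℤ) :
    Γ i (Ac F N t n i)
      = (q ^ n) • (Xv F N i ^ n *
          ∏ j ∈ Finset.univ.erase i,
            (t • (q • Xv F N i) - Xv F N j) / (q • Xv F N i - Xv F N j)) := by
  rw [Ac, map_mul, map_zpow₀ (Γ i), hΓ i i, if_pos rfl, map_prod]
  have hpow : (q • Xv F N i) ^ n = q ^ n • Xv F N i ^ n := by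
    rw [Algebra.smul_def, Algebra.smul_def, mul_zpow, map_zpow₀]
  rw [hpow, smul_mul_assoc]
  refine congrArg (fun z => q ^ n • (Xv F N i ^ n * z)) ?_
  refine Finset.prod_congr rfl fun j hj => ?_
  have hji : j ≠ i := Finset.ne_of_mem_erase hj
  rw [map_div₀, map_sub, map_sub, hΓ i j, if_neg hji, map_smul, hΓ i i,
    if_pos rfl]

lemma gamma_Ac_ne {i j : Fin N} (hij : i ≠ j) (n : ℤ) :
    Γ i (Ac F N t n j)
      = Xv F N j ^ n *
          ((t • Xv F N j - q • Xv F N i) / (Xv F N j - q • Xv F N i) *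
            ∏ k ∈ (Finset.univ.erase j).erase i,
              (t • Xv F N j - Xv F N k) / (Xv F N j - Xv F N k)) := by
  rw [Ac, map_mul, map_zpow₀ (Γ i), hΓ i j, if_neg (Ne.symm hij), map_prod]
  congr 1
  have hmem : i ∈ Finset.univ.erase j := Finset.mem_erase.2 ⟨hij, Finset.mem_univ i⟩
  rw [← Finset.mul_prod_erase _ _ hmem]
  congr 1
  · rw [map_div₀, map_sub, map_sub, map_smul, hΓ i j, if_neg (Ne.symm hij),
      hΓ i i, if_pos rfl]
  · refine Finset.prod_congr rfl fun k hk => ?_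
    have hki : k ≠ i := Finset.ne_of_mem_erase hk
    have hkj : k ≠ j := Finset.ne_of_mem_erase (Finset.mem_of_mem_erase hk)
    rw [map_div₀, map_sub, map_sub, map_smul, hΓ i j, if_neg (Ne.symm hij),
      hΓ i k, if_neg hki]

omit hΓ in
lemma Ac_factor {i j : Fin N} (hij : i ≠ j) (m : ℤ) :
    Ac F N t m i
      = Xv F N i ^ m *
          ((t • Xv F N i - Xv F N j) / (Xv F N i - Xv F N j) *
            ∏ k ∈ (Finset.univ.erase i).erase j,
              (t • Xv F N i - Xv F N k) / (Xv F N i - Xv F N k)) := by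
  rw [Ac]
  congr 1
  rw [← Finset.mul_prod_erase _ _ (Finset.mem_erase.2 ⟨Ne.symm hij, Finset.mem_univ j⟩)]

end MacLemmas


section Main

variable (q t : F) (Γ : Fin N → (RatF F N ≃ₐ[F] RatF F N))
variable (hq : q ≠ 0)
variable (hΓ : ∀ i j : Fin N, Γ i (Xv F N j) = if j = i then q • Xv F N j else Xv F N j)

include hq hΓ in
lemma diag_T_zero (a b : ℤ) (i : Fin N) :
    Ac F N t a i * Γ i (Ac F N t b i) + Ac F N t (b - 1) i * Γ i (Ac F N t (a + 1) i)
      - q • (Ac F N t b i * Γ i (Ac F N t a i)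
          + Ac F N t (a + 1) i * Γ i (Ac F N t (b - 1) i)) = 0 := by
  have hx : Xv F N i ≠ 0 := Xv_ne_zero i
  have key : ∀ m m' : ℤ, Ac F N t m i * Γ i (Ac F N t m' i)
      = (q ^ m') • (Xv F N i ^ (m + m') *
          ((∏ j ∈ Finset.univ.erase i,
              (t • Xv F N i - Xv F N j) / (Xv F N i - Xv F N j)) *
           (∏ j ∈ Finset.univ.erase i,
              (t • (q • Xv F N i) - Xv F N j) / (q • Xv F N i - Xv F N j)))) := by
    intro m m'
    rw [gamma_Ac_self q t Γ hΓ, Ac, mul_smul_comm]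
    congr 1
    rw [zpow_add₀ hx]
    ring
  rw [key, key, key, key]
  rw [show b - 1 + (a + 1) = a + b from by ring, show a + 1 + (b - 1) = a + b from by ring,
    show b + a = a + b from by ring]
  have h1 : q ^ (a + 1) = q * q ^ a := by
    rw [zpow_add_one₀ hq]; ring
  have h2 : q ^ b = q ^ (b - 1) * q := by
    rw [← zpow_add_one₀ hq]; congr 1; ring
  rw [h1, h2]
  module

end Main


lemma sum_pair_split {M : Type} [AddCommMonoid M] (g : Fin N → Fin N → M) :
    ∑ i : Fin N, ∑ j : Fin N, g i j
      = (∑ i : Fin N, g i i)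
        + ∑ i : Fin N, ∑ j ∈ Finset.univ.filter (fun j : Fin N => i < j),
            (g i j + g j i) := by
  have step1 : ∀ i : Fin N, ∑ j : Fin N, g i j
      = g i i + ∑ j ∈ Finset.univ.erase i, g i j :=
    fun i => (Finset.add_sum_erase _ _ (Finset.mem_univ i)).symm
  have step2 : ∀ i : Fin N, ∑ j ∈ Finset.univ.erase i, g i j
      = (∑ j ∈ Finset.univ.filter (fun j => i < j), g i j)
        + ∑ j ∈ Finset.univ.filter (fun j => j < i), g i j := by
    intro i
    rw [← Finset.sum_filter_add_sum_filter_not (Finset.univ.erase i) (fun j => i < j)]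
    congr 1
    · congr 1
      ext j
      simp only [Finset.mem_filter, Finset.mem_erase, Finset.mem_univ, and_true,
        true_and]
      constructor
      · exact fun h => h.2
      · exact fun h => ⟨(ne_of_lt h).symm, h⟩
    · congr 1
      ext j
      simp only [Finset.mem_filter, Finset.mem_erase, Finset.mem_univ, and_true,
        true_and]
      constructor
      · exact fun h => lt_of_le_of_ne (not_lt.1 h.2) h.1
      · exact fun h => ⟨ne_of_lt h, not_lt.2 (le_of_lt h)⟩
  have step3 : ∑ i : Fin N, ∑ j ∈ Finset.univ.filter (fun j => j < i), g i j
      = ∑ i : Fin N, ∑ j ∈ Finset.univ.filter (fun j => i < j), g j i := by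
    rw [Finset.sum_comm' (t' := Finset.univ) (s' := fun j => Finset.univ.filter (fun i => j < i))]
    intro i j
    simp [Finset.mem_filter]
  simp only [step1, step2]
  rw [Finset.sum_add_distrib, Finset.sum_add_distrib, step3,
    ← Finset.sum_add_distrib]
  simp [Finset.sum_add_distrib]


section OffDiag

variable (q t : F) (Γ : Fin N → (RatF F N ≃ₐ[F] RatF F N))
variable (hq : q ≠ 0)
variable (hΓ : ∀ i j : Fin N, Γ i (Xv F N j) = if j = i then q • Xv F N j else Xv F N j)

include hq hΓ in
set_option maxHeartbeats 1000000 in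
lemma offdiag_T {i j : Fin N} (hij : i ≠ j) (a b : ℤ) :
    (Ac F N t a i * Γ i (Ac F N t b j) + Ac F N t (b - 1) i * Γ i (Ac F N t (a + 1) j)
      - q • (Ac F N t b i * Γ i (Ac F N t a j)
          + Ac F N t (a + 1) i * Γ i (Ac F N t (b - 1) j)))
    + (Ac F N t a j * Γ j (Ac F N t b i) + Ac F N t (b - 1) j * Γ j (Ac F N t (a + 1) i)
      - q • (Ac F N t b j * Γ j (Ac F N t a i)
          + Ac F N t (a + 1) j * Γ j (Ac F N t (b - 1) i)))
    = ((1 - q) * t) •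
        (((Xv F N i ^ (b + 1) * Xv F N j ^ a - Xv F N j ^ (b + 1) * Xv F N i ^ a)
            / (Xv F N i - Xv F N j)) *
          (∏ k ∈ (Finset.univ.erase i).erase j,
            ((t • Xv F N i - Xv F N k) * (t • Xv F N j - Xv F N k))
              / ((Xv F N i - Xv F N k) * (Xv F N j - Xv F N k)))
        - ((Xv F N i ^ (b - 1) * Xv F N j ^ (a + 2) - Xv F N j ^ (b - 1) * Xv F N i ^ (a + 2))
            / (Xv F N i - Xv F N j)) *
          (∏ k ∈ (Finset.univ.erase i).erase j,
            ((t • Xv F N i - Xv F N k) * (t • Xv F N j - Xv F N k))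
              / ((Xv F N i - Xv F N k) * (Xv F N j - Xv F N k)))) := by
  have hji : j ≠ i := Ne.symm hij
  have hx : Xv F N i ≠ 0 := Xv_ne_zero i
  have hy : Xv F N j ≠ 0 := Xv_ne_zero j
  have hxy : Xv F N i - Xv F N j ≠ 0 := Xv_sub_ne_zero hij
  have h1 : Xv F N j - algebraMap F (RatF F N) q * Xv F N i ≠ 0 := by
    have := Xv_sub_smul_ne_zero (N := N) q hji
    rwa [Algebra.smul_def] at this
  have h2 : Xv F N i - algebraMap F (RatF F N) q * Xv F N j ≠ 0 := by
    have := Xv_sub_smul_ne_zero (N := N) q hij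
    rwa [Algebra.smul_def] at this
  have hP : (∏ k ∈ (Finset.univ.erase i).erase j,
        ((t • Xv F N i - Xv F N k) * (t • Xv F N j - Xv F N k))
          / ((Xv F N i - Xv F N k) * (Xv F N j - Xv F N k)))
      = (∏ k ∈ (Finset.univ.erase i).erase j,
          (t • Xv F N i - Xv F N k) / (Xv F N i - Xv F N k)) *
        (∏ k ∈ (Finset.univ.erase j).erase i,
          (t • Xv F N j - Xv F N k) / (Xv F N j - Xv F N k)) := by
    rw [show (Finset.univ.erase j).erase i = (Finset.univ.erase i).erase j from
      Finset.erase_right_comm, ← Finset.prod_mul_distrib]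
    exact Finset.prod_congr rfl fun k _ => (div_mul_div_comm _ _ _ _).symm
  rw [gamma_Ac_ne q t Γ hΓ hij b, gamma_Ac_ne q t Γ hΓ hij (a + 1),
    gamma_Ac_ne q t Γ hΓ hij a, gamma_Ac_ne q t Γ hΓ hij (b - 1),
    gamma_Ac_ne q t Γ hΓ hji b, gamma_Ac_ne q t Γ hΓ hji (a + 1),
    gamma_Ac_ne q t Γ hΓ hji a, gamma_Ac_ne q t Γ hΓ hji (b - 1),
    Ac_factor t hij a, Ac_factor t hij (b - 1), Ac_factor t hij b,
    Ac_factor t hij (a + 1), Ac_factor t hji a, Ac_factor t hji (b - 1),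
    Ac_factor t hji b, Ac_factor t hji (a + 1), hP]
  set P1 := ∏ k ∈ (Finset.univ.erase i).erase j,
    (t • Xv F N i - Xv F N k) / (Xv F N i - Xv F N k) with hP1
  set P2 := ∏ k ∈ (Finset.univ.erase j).erase i,
    (t • Xv F N j - Xv F N k) / (Xv F N j - Xv F N k) with hP2
  simp only [Algebra.smul_def, map_sub, map_mul, map_one]
  have main := core_identity (Xv F N i) (Xv F N j) (algebraMap F (RatF F N) t)
    (algebraMap F (RatF F N) q) a b hx hy hxy h1 h2
  linear_combination P1 * P2 * main

end OffDiag


section Pair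

variable (q t : F) (Γ : Fin N → (RatF F N ≃ₐ[F] RatF F N))
variable (hq : q ≠ 0)
variable (hΓ : ∀ i j : Fin N, Γ i (Xv F N j) = if j = i then q • Xv F N j else Xv F N j)

include hq hΓ in
set_option maxHeartbeats 2000000 in
lemma pair (a b : ℤ) (f : RatF F N) :
    (Mac F N t Γ a (Mac F N t Γ b f) - q • Mac F N t Γ b (Mac F N t Γ a f))
      + (Mac F N t Γ (b - 1) (Mac F N t Γ (a + 1) f)
        - q • Mac F N t Γ (a + 1) (Mac F N t Γ (b - 1) f))
    = ((1 - q) * t) • (MacPair F N t Γ b a f - MacPair F N t Γ (b - 2) (a + 2) f) := by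
  classical
  rw [Mac_Mac t Γ a b f, Mac_Mac t Γ b a f, Mac_Mac t Γ (b - 1) (a + 1) f,
    Mac_Mac t Γ (a + 1) (b - 1) f]
  simp only [Finset.smul_sum]
  simp only [← Finset.sum_sub_distrib, ← Finset.sum_add_distrib]
  rw [sum_pair_split]
  have hdiag : ∀ i : Fin N,
      (Ac F N t a i * Γ i (Ac F N t b i) * Γ i (Γ i f)
          - q • (Ac F N t b i * Γ i (Ac F N t a i) * Γ i (Γ i f)))
        + (Ac F N t (b - 1) i * Γ i (Ac F N t (a + 1) i) * Γ i (Γ i f)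
          - q • (Ac F N t (a + 1) i * Γ i (Ac F N t (b - 1) i) * Γ i (Γ i f))) = 0 := by
    intro i
    have h0 := diag_T_zero q t Γ hq hΓ a b i
    simp only [Algebra.smul_def, map_mul, map_sub, map_one] at h0 ⊢
    linear_combination Γ i (Γ i f) * h0
  rw [Finset.sum_eq_zero fun i _ => hdiag i, zero_add]
  have hR : ((1 - q) * t) • (MacPair F N t Γ b a f - MacPair F N t Γ (b - 2) (a + 2) f)
      = ∑ i : Fin N, ∑ j ∈ Finset.univ.filter (fun j : Fin N => i < j),
          ((1 - q) * t) •
            (((Xv F N i ^ (b + 1) * Xv F N j ^ a - Xv F N j ^ (b + 1) * Xv F N i ^ a)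
                / (Xv F N i - Xv F N j)) *
              (∏ k ∈ (Finset.univ.erase i).erase j,
                ((t • Xv F N i - Xv F N k) * (t • Xv F N j - Xv F N k))
                  / ((Xv F N i - Xv F N k) * (Xv F N j - Xv F N k))) * Γ i (Γ j f)
            - ((Xv F N i ^ (b - 1) * Xv F N j ^ (a + 2) - Xv F N j ^ (b - 1) * Xv F N i ^ (a + 2))
                / (Xv F N i - Xv F N j)) *
              (∏ k ∈ (Finset.univ.erase i).erase j,
                ((t • Xv F N i - Xv F N k) * (t • Xv F N j - Xv F N k))
                  / ((Xv F N i - Xv F N k) * (Xv F N j - Xv F N k))) * Γ i (Γ j f)) := by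
    rw [MacPair, MacPair]
    simp only [show b - 2 + 1 = b - 1 from by ring]
    rw [← Finset.sum_sub_distrib, Finset.smul_sum]
    refine Finset.sum_congr rfl fun i _ => ?_
    rw [← Finset.sum_sub_distrib, Finset.smul_sum]
  rw [hR]
  refine Finset.sum_congr rfl fun i _ => Finset.sum_congr rfl fun j hj => ?_
  have hij : i ≠ j := ne_of_lt (Finset.mem_filter.1 hj).2
  have hT := offdiag_T q t Γ hq hΓ hij a b
  have hc := gamma_comm q Γ hΓ j i f
  rw [hc]
  simp only [Algebra.smul_def, map_mul, map_sub, map_one] at hT ⊢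
  linear_combination Γ i (Γ j f) * hT

end Pair


lemma MacPair_anti (t : F) (Γ : Fin N → (RatF F N ≃ₐ[F] RatF F N)) (a b : ℤ) (f : RatF F N) :
    MacPair F N t Γ a b f = - MacPair F N t Γ (b - 1) (a + 1) f := by
  rw [eq_neg_iff_add_eq_zero]
  rw [MacPair, MacPair, ← Finset.sum_add_distrib]
  refine Finset.sum_eq_zero fun i _ => ?_
  rw [← Finset.sum_add_distrib]
  refine Finset.sum_eq_zero fun j _ => ?_
  simp only [show b - 1 + 1 = b from by ring]
  ring

end St11


/-- the two identities
`(1−q)t(𝓜_{n+4k,n} − 𝓜_{n+2k,n+2k}) = Σ_{ℓ=0}^{k−1}([𝓜_{n+2ℓ},𝓜_{n+4k−2ℓ}]_q + [𝓜_{n+4k−1−2ℓ},𝓜_{n+2ℓ+1}]_q)`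
and
`(1−q)t(𝓜_{n+4k+2,n} + 𝓜_{n+2k+1,n+2k+1}) = Σ_{ℓ=0}^{k}([𝓜_{n+2ℓ},𝓜_{n+4k+2−2ℓ}]_q + [𝓜_{n+4k+1−2ℓ},𝓜_{n+2ℓ+1}]_q)`,
where `[X,Y]_q = X∘Y − q·Y∘X`. -/
theorem statement11 (F : Type) [Field F] [CharZero F] (q t : F) (hq : q ≠ 0) (ht : t ≠ 0)
    (N : ℕ) (hN : 1 ≤ N)
    (Γ : Fin N → (RatF F N ≃ₐ[F] RatF F N))
    (hΓ : ∀ i j : Fin N, Γ i (Xv F N j) = if j = i then q • Xv F N j else Xv F N j)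
    (n : ℤ) (k : ℕ) (f : RatF F N) :
    (((1 - q) * t) • (MacPair F N t Γ (n + 4 * k) n f - MacPair F N t Γ (n + 2 * k) (n + 2 * k) f)
      = ∑ l ∈ Finset.range k,
          ((Mac F N t Γ (n + 2 * l) (Mac F N t Γ (n + 4 * k - 2 * l) f)
              - q • Mac F N t Γ (n + 4 * k - 2 * l) (Mac F N t Γ (n + 2 * l) f))
            + (Mac F N t Γ (n + 4 * k - 1 - 2 * l) (Mac F N t Γ (n + 2 * l + 1) f)
              - q • Mac F N t Γ (n + 2 * l + 1) (Mac F N t Γ (n + 4 * k - 1 - 2 * l) f)))) ∧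
    (((1 - q) * t) • (MacPair F N t Γ (n + 4 * k + 2) n f
          + MacPair F N t Γ (n + 2 * k + 1) (n + 2 * k + 1) f)
      = ∑ l ∈ Finset.range (k + 1),
          ((Mac F N t Γ (n + 2 * l) (Mac F N t Γ (n + 4 * k + 2 - 2 * l) f)
              - q • Mac F N t Γ (n + 4 * k + 2 - 2 * l) (Mac F N t Γ (n + 2 * l) f))
            + (Mac F N t Γ (n + 4 * k + 1 - 2 * l) (Mac F N t Γ (n + 2 * l + 1) f)
              - q • Mac F N t Γ (n + 2 * l + 1) (Mac F N t Γ (n + 4 * k + 1 - 2 * l) f)))) := by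
  constructor
  · have step : ∑ l ∈ Finset.range k,
        ((Mac F N t Γ (n + 2 * l) (Mac F N t Γ (n + 4 * k - 2 * l) f)
            - q • Mac F N t Γ (n + 4 * k - 2 * l) (Mac F N t Γ (n + 2 * l) f))
          + (Mac F N t Γ (n + 4 * k - 1 - 2 * l) (Mac F N t Γ (n + 2 * l + 1) f)
            - q • Mac F N t Γ (n + 2 * l + 1) (Mac F N t Γ (n + 4 * k - 1 - 2 * l) f)))
        = ∑ l ∈ Finset.range k,
          ((1 - q) * t) • (MacPair F N t Γ (n + 4 * k - 2 * l) (n + 2 * l) f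
            - MacPair F N t Γ (n + 4 * k - 2 * l - 2) (n + 2 * l + 2) f) := by
      refine Finset.sum_congr rfl fun l _ => ?_
      rw [show n + 4 * (k : ℤ) - 1 - 2 * (l : ℤ) = n + 4 * (k : ℤ) - 2 * (l : ℤ) - 1 from
        by ring]
      exact St11.pair q t Γ hq hΓ (n + 2 * l) (n + 4 * k - 2 * l) f
    rw [step, ← Finset.smul_sum]
    congr 1
    have tele := Finset.sum_range_sub'
      (f := fun l : ℕ => MacPair F N t Γ (n + 4 * (k : ℤ) - 2 * (l : ℤ)) (n + 2 * (l : ℤ)) f) k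
    have step2 : ∑ l ∈ Finset.range k,
        (MacPair F N t Γ (n + 4 * k - 2 * l) (n + 2 * l) f
          - MacPair F N t Γ (n + 4 * k - 2 * l - 2) (n + 2 * l + 2) f)
        = ∑ l ∈ Finset.range k,
        (MacPair F N t Γ (n + 4 * (k : ℤ) - 2 * (l : ℤ)) (n + 2 * (l : ℤ)) f
          - MacPair F N t Γ (n + 4 * (k : ℤ) - 2 * ((l + 1 : ℕ) : ℤ)) (n + 2 * ((l + 1 : ℕ) : ℤ)) f) := by
      refine Finset.sum_congr rfl fun l _ => ?_
      rw [show n + 4 * (k : ℤ) - 2 * ((l + 1 : ℕ) : ℤ) = n + 4 * (k : ℤ) - 2 * (l : ℤ) - 2 from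
        by push_cast; ring,
        show n + 2 * ((l + 1 : ℕ) : ℤ) = n + 2 * (l : ℤ) + 2 from by push_cast; ring]
    rw [step2, tele]
    rw [show ((0 : ℕ) : ℤ) = 0 from rfl]
    rw [show n + 4 * (k : ℤ) - 2 * (0 : ℤ) = n + 4 * (k : ℤ) from by ring,
      show n + 2 * (0 : ℤ) = n from by ring,
      show n + 4 * (k : ℤ) - 2 * (k : ℤ) = n + 2 * (k : ℤ) from by ring]
  · have step : ∑ l ∈ Finset.range (k + 1),
        ((Mac F N t Γ (n + 2 * l) (Mac F N t Γ (n + 4 * k + 2 - 2 * l) f)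
            - q • Mac F N t Γ (n + 4 * k + 2 - 2 * l) (Mac F N t Γ (n + 2 * l) f))
          + (Mac F N t Γ (n + 4 * k + 1 - 2 * l) (Mac F N t Γ (n + 2 * l + 1) f)
            - q • Mac F N t Γ (n + 2 * l + 1) (Mac F N t Γ (n + 4 * k + 1 - 2 * l) f)))
        = ∑ l ∈ Finset.range (k + 1),
          ((1 - q) * t) • (MacPair F N t Γ (n + 4 * k + 2 - 2 * l) (n + 2 * l) f
            - MacPair F N t Γ (n + 4 * k + 2 - 2 * l - 2) (n + 2 * l + 2) f) := by
      refine Finset.sum_congr rfl fun l _ => ?_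
      rw [show n + 4 * (k : ℤ) + 1 - 2 * (l : ℤ) = n + 4 * (k : ℤ) + 2 - 2 * (l : ℤ) - 1 from
        by ring]
      exact St11.pair q t Γ hq hΓ (n + 2 * l) (n + 4 * k + 2 - 2 * l) f
    rw [step, ← Finset.smul_sum]
    congr 1
    have tele := Finset.sum_range_sub'
      (f := fun l : ℕ => MacPair F N t Γ (n + 4 * (k : ℤ) + 2 - 2 * (l : ℤ)) (n + 2 * (l : ℤ)) f)
      (k + 1)
    have step2 : ∑ l ∈ Finset.range (k + 1),
        (MacPair F N t Γ (n + 4 * k + 2 - 2 * l) (n + 2 * l) f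
          - MacPair F N t Γ (n + 4 * k + 2 - 2 * l - 2) (n + 2 * l + 2) f)
        = ∑ l ∈ Finset.range (k + 1),
        (MacPair F N t Γ (n + 4 * (k : ℤ) + 2 - 2 * (l : ℤ)) (n + 2 * (l : ℤ)) f
          - MacPair F N t Γ (n + 4 * (k : ℤ) + 2 - 2 * ((l + 1 : ℕ) : ℤ)) (n + 2 * ((l + 1 : ℕ) : ℤ)) f) := by
      refine Finset.sum_congr rfl fun l _ => ?_
      rw [show n + 4 * (k : ℤ) + 2 - 2 * ((l + 1 : ℕ) : ℤ) = n + 4 * (k : ℤ) + 2 - 2 * (l : ℤ) - 2 from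
        by push_cast; ring,
        show n + 2 * ((l + 1 : ℕ) : ℤ) = n + 2 * (l : ℤ) + 2 from by push_cast; ring]
    rw [step2, tele]
    rw [show ((0 : ℕ) : ℤ) = 0 from rfl]
    rw [show n + 4 * (k : ℤ) + 2 - 2 * (0 : ℤ) = n + 4 * (k : ℤ) + 2 from by ring,
      show n + 2 * (0 : ℤ) = n from by ring,
      show n + 4 * (k : ℤ) + 2 - 2 * ((k + 1 : ℕ) : ℤ) = n + 2 * (k : ℤ) from by push_cast; ring,
      show n + 2 * ((k + 1 : ℕ) : ℤ) = n + 2 * (k : ℤ) + 2 from by push_cast; ring]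
    rw [St11.MacPair_anti t Γ (n + 2 * k) (n + 2 * k + 2) f,
      show n + 2 * (k : ℤ) + 2 - 1 = n + 2 * (k : ℤ) + 1 from by ring]
    ring









end
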